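/- Let n ≥ 1 and let f : {0,1}^n → ℝ be any function. Then there exist m ∈ ℕ, a constant c ∈ ℝ, linear coefficients u : {1,…,n+m} → ℝ, and quadratic coefficients e : {1,…,n+m} × {1,…,n+m} → ℝ such that for every x ∈ {0,1}^n, f(x) = min over w ∈ {0,1}^m of [c + ∑_{j=1}^{n+m} u_j y_j + ∑_{1 ≤ i < j ≤ n+m} e_{ij} y_i y_j], where y = (x, w) ∈ {0,1}^{n+m}. In particular, min_{x ∈ {0,1}^n} f(x) = min_{y ∈ {0,1}^{n+m}} of the quadratic expression. -/

import Mathlib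

open Finset

namespace PBQubo

/-- real value of a bit -/
noncomputable def B (t : Fin 2) : ℝ := ((t : ℕ) : ℝ)

lemma B_nonneg (t : Fin 2) : 0 ≤ B t := by unfold B; positivity

lemma B_le_one (t : Fin 2) : B t ≤ 1 := by fin_cases t <;> norm_num [B]

lemma B_sq (t : Fin 2) : B t * B t = B t := by fin_cases t <;> norm_num [B]

lemma B_zero : B 0 = 0 := by norm_num [B]

lemma B_one : B 1 = 1 := by norm_num [B]

lemma ham_term (a b : Fin 2) : B a + B b - 2 * (B a * B b) = if a = b then 0 else 1 := by
  fin_cases a <;> fin_cases b <;> norm_num [B]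

noncomputable def H (n : ℕ) (x v : Fin n → Fin 2) : ℝ :=
  ∑ i, (B (x i) + B (v i) - 2 * (B (x i) * B (v i)))

lemma H_eq (n : ℕ) (x v : Fin n → Fin 2) :
    H n x v = ∑ i, (if x i = v i then (0:ℝ) else 1) := by
  unfold H; exact Finset.sum_congr rfl fun i _ => ham_term _ _

lemma H_nonneg (n : ℕ) (x v : Fin n → Fin 2) : 0 ≤ H n x v := by
  rw [H_eq]; apply Finset.sum_nonneg; intro i _; split <;> norm_num

lemma H_self (n : ℕ) (x : Fin n → Fin 2) : H n x x = 0 := by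
  rw [H_eq]; simp

lemma H_ge_one (n : ℕ) (x v : Fin n → Fin 2) (h : x ≠ v) : 1 ≤ H n x v := by
  obtain ⟨i, hi⟩ : ∃ i, x i ≠ v i := by
    by_contra hc; push_neg at hc; exact h (funext hc)
  rw [H_eq]
  have : (1:ℝ) = if x i = v i then (0:ℝ) else 1 := by simp [hi]
  calc (1:ℝ) = if x i = v i then (0:ℝ) else 1 := this
    _ ≤ _ := Finset.single_le_sum (f := fun j => if x j = v j then (0:ℝ) else 1)
        (fun j _ => by split <;> norm_num) (mem_univ i)

lemma pair_sum {N : ℕ} (g : Fin N → Fin N → ℝ) (hsymm : ∀ j k, g j k = g k j)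
    (hdiag : ∀ j, g j j = 0) :
    ∑ p ∈ Finset.univ.filter (fun p : Fin N × Fin N => p.1 < p.2), g p.1 p.2
      = (∑ j, ∑ k, g j k) / 2 := by
  have hall : ∑ j, ∑ k, g j k = ∑ p : Fin N × Fin N, g p.1 p.2 := by
    rw [Fintype.sum_prod_type]
  have hsplit := Finset.sum_filter_add_sum_filter_not Finset.univ
    (fun p : Fin N × Fin N => p.1 < p.2) (fun p => g p.1 p.2)
  have hgt_eq_lt : ∑ p ∈ Finset.univ.filter (fun p : Fin N × Fin N => p.2 < p.1), g p.1 p.2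
      = ∑ p ∈ Finset.univ.filter (fun p : Fin N × Fin N => p.1 < p.2), g p.1 p.2 := by
    apply Finset.sum_nbij' (fun p => Prod.swap p) (fun p => Prod.swap p)
    · intro p hp; simp only [mem_filter, mem_univ, true_and] at hp ⊢; exact hp
    · intro p hp; simp only [mem_filter, mem_univ, true_and] at hp ⊢; exact hp
    · intro p _; simp
    · intro p _; simp
    · intro p _; exact hsymm p.1 p.2
  have hnot : ∑ p ∈ Finset.univ.filter (fun p : Fin N × Fin N => ¬ p.1 < p.2), g p.1 p.2
      = ∑ p ∈ Finset.univ.filter (fun p : Fin N × Fin N => p.1 < p.2), g p.1 p.2 := by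
    rw [← hgt_eq_lt]
    have h1 : Finset.univ.filter (fun p : Fin N × Fin N => ¬ p.1 < p.2)
        = Finset.univ.filter (fun p : Fin N × Fin N => p.2 < p.1)
          ∪ Finset.univ.filter (fun p : Fin N × Fin N => p.1 = p.2) := by
      ext p
      simp only [mem_filter, mem_univ, true_and, mem_union]
      constructor
      · intro h
        rcases lt_or_eq_of_le (not_lt.mp h) with h' | h'
        · exact Or.inl h'
        · exact Or.inr h'.symm
      · rintro (h | h)
        · exact not_lt.mpr h.le
        · exact not_lt.mpr h.ge
    have h2 : Disjoint (Finset.univ.filter (fun p : Fin N × Fin N => p.2 < p.1))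
        (Finset.univ.filter (fun p : Fin N × Fin N => p.1 = p.2)) := by
      rw [Finset.disjoint_left]
      intro p hp hp'
      simp only [mem_filter, mem_univ, true_and] at hp hp'
      exact (ne_of_lt hp) hp'.symm
    rw [h1, Finset.sum_union h2]
    have h3 : ∑ p ∈ Finset.univ.filter (fun p : Fin N × Fin N => p.1 = p.2), g p.1 p.2 = 0 := by
      apply Finset.sum_eq_zero
      intro p hp
      simp only [mem_filter] at hp
      rw [hp.2]; exact hdiag p.2
    rw [h3, add_zero]
  linarith [hsplit, hnot, hall]


variable {n m : ℕ}

noncomputable def uu (n m : ℕ) (P : ℝ) (f : (Fin n → Fin 2) → ℝ)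
    (d : Fin m ≃ (Fin n → Fin 2)) : Fin (n + m) → ℝ :=
  fun j => Fin.addCases (motive := fun _ => ℝ) (fun _ => 0)
    (fun z => f (d z) - P + P * ∑ i, B (d z i)) j

noncomputable def ee (n m : ℕ) (P : ℝ) (d : Fin m ≃ (Fin n → Fin 2)) :
    Fin (n + m) → Fin (n + m) → ℝ :=
  fun j k =>
    Fin.addCases (motive := fun _ => ℝ)
      (fun i => Fin.addCases (motive := fun _ => ℝ) (fun _ => 0)
        (fun z => P * (1 - 2 * B (d z i))) k)
      (fun z => Fin.addCases (motive := fun _ => ℝ) (fun i => P * (1 - 2 * B (d z i)))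
        (fun z' => if z = z' then 0 else 2 * P) k) j

lemma ee_symm (P : ℝ) (d : Fin m ≃ (Fin n → Fin 2)) (j k : Fin (n + m)) :
    ee n m P d j k = ee n m P d k j := by
  induction j using Fin.addCases with
  | left i =>
      induction k using Fin.addCases with
      | left i' => simp [ee, Fin.addCases_left]
      | right z => simp [ee, Fin.addCases_left, Fin.addCases_right]
  | right z =>
      induction k using Fin.addCases with
      | left i' => simp [ee, Fin.addCases_left, Fin.addCases_right]
      | right z' =>
          simp only [ee, Fin.addCases_right]
          by_cases h : z = z' <;> simp [h, eq_comm]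

lemma ee_diag (P : ℝ) (d : Fin m ≃ (Fin n → Fin 2)) (j : Fin (n + m)) :
    ee n m P d j j = 0 := by
  induction j using Fin.addCases with
  | left i => simp [ee, Fin.addCases_left]
  | right z => simp [ee, Fin.addCases_right]

noncomputable def G (n m : ℕ) (P : ℝ) (f : (Fin n → Fin 2) → ℝ)
    (d : Fin m ≃ (Fin n → Fin 2)) (x : Fin n → Fin 2) (w : Fin m → Fin 2) : ℝ :=
  (∑ z, B (w z) * f (d z)) + P * ((∑ z, B (w z)) - 1) ^ 2
    + P * ∑ z, B (w z) * H n x (d z)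

lemma key (P : ℝ) (f : (Fin n → Fin 2) → ℝ) (d : Fin m ≃ (Fin n → Fin 2))
    (x : Fin n → Fin 2) (w : Fin m → Fin 2) :
    P + (∑ j, uu n m P f d j * (((Fin.append x w j).val : ℕ) : ℝ)) +
      ∑ p ∈ Finset.univ.filter (fun p : Fin (n + m) × Fin (n + m) => p.1 < p.2),
        ee n m P d p.1 p.2 * (((Fin.append x w p.1).val : ℕ) : ℝ) *
          (((Fin.append x w p.2).val : ℕ) : ℝ)
    = G n m P f d x w := by
  have hB : ∀ j, (((Fin.append x w j).val : ℕ) : ℝ) = B (Fin.append x w j) := fun _ => rfl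
  simp only [hB]
  -- quadratic part via symmetric double sum
  rw [pair_sum (fun j k => ee n m P d j k * B (Fin.append x w j) * B (Fin.append x w k))
    (fun j k => by rw [ee_symm]; ring) (fun j => by rw [ee_diag]; ring)]
  -- split sums into blocks
  rw [Fin.sum_univ_add (f := fun j => uu n m P f d j * B (Fin.append x w j))]
  rw [Fin.sum_univ_add (f := fun j => ∑ k, ee n m P d j k * B (Fin.append x w j) * B (Fin.append x w k))]
  simp only [Fin.sum_univ_add (f := fun k => ee n m P d _ k * B (Fin.append x w _) * B (Fin.append x w k))]
  simp only [uu, ee, Fin.addCases_left, Fin.addCases_right, Fin.append_left, Fin.append_right,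
    zero_mul, Finset.sum_const_zero, zero_add]
  have h2 : ∑ z, (f (d z) - P + P * ∑ i, B (d z i)) * B (w z)
      = (∑ z, B (w z) * f (d z)) - P * ∑ z, B (w z)
        + P * ∑ z, B (w z) * ∑ i, B (d z i) := by
    rw [Finset.mul_sum, Finset.mul_sum, ← Finset.sum_sub_distrib, ← Finset.sum_add_distrib]
    exact Finset.sum_congr rfl fun z _ => by ring
  have h3 : ∑ i, ∑ z, P * (1 - 2 * B (d z i)) * B (x i) * B (w z)
      = P * (∑ z, B (w z) * ∑ i, B (x i))
        - 2 * P * ∑ z, B (w z) * ∑ i, B (x i) * B (d z i) := by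
    rw [Finset.sum_comm, Finset.mul_sum, Finset.mul_sum, ← Finset.sum_sub_distrib]
    refine Finset.sum_congr rfl fun z _ => ?_
    rw [Finset.mul_sum, Finset.mul_sum, Finset.mul_sum, Finset.mul_sum, ← Finset.sum_sub_distrib]
    exact Finset.sum_congr rfl fun i _ => by ring
  have h3' : ∑ z, ∑ i, P * (1 - 2 * B (d z i)) * B (w z) * B (x i)
      = P * (∑ z, B (w z) * ∑ i, B (x i))
        - 2 * P * ∑ z, B (w z) * ∑ i, B (x i) * B (d z i) := by
    rw [← h3, Finset.sum_comm]
    exact Finset.sum_congr rfl fun i _ => Finset.sum_congr rfl fun z _ => by ring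
  have h4 : ∑ z, ∑ z', (if z = z' then (0:ℝ) else 2 * P) * B (w z) * B (w z')
      = 2 * P * ((∑ z, B (w z)) * (∑ z, B (w z))) - 2 * P * ∑ z, B (w z) := by
    have per_z : ∀ z, ∑ z', (if z = z' then (0:ℝ) else 2 * P) * B (w z) * B (w z')
        = 2 * P * (B (w z) * ∑ z', B (w z')) - 2 * P * B (w z) := by
      intro z
      have step : ∀ z', (if z = z' then (0:ℝ) else 2 * P) * B (w z) * B (w z')
          = 2 * P * (B (w z) * B (w z'))
            - (if z' = z then 2 * P * (B (w z) * B (w z')) else 0) := by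
        intro z'
        by_cases h : z = z'
        · simp [h]
        · rw [if_neg h, if_neg (fun hh : z' = z => h hh.symm)]; ring
      rw [Finset.sum_congr rfl fun z' _ => step z', Finset.sum_sub_distrib,
        Finset.sum_ite_eq' Finset.univ z (fun z' => 2 * P * (B (w z) * B (w z')))]
      simp only [mem_univ, if_true]
      rw [Finset.mul_sum, Finset.mul_sum]
      have : B (w z) * B (w z) = B (w z) := B_sq _
      rw [this]
    rw [Finset.sum_congr rfl fun z _ => per_z z, Finset.sum_sub_distrib,
      ← Finset.mul_sum, ← Finset.mul_sum, ← Finset.sum_mul]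
  have hH : ∑ z, B (w z) * H n x (d z)
      = (∑ z, B (w z) * ∑ i, B (x i)) + (∑ z, B (w z) * ∑ i, B (d z i))
        - 2 * ∑ z, B (w z) * ∑ i, B (x i) * B (d z i) := by
    have per : ∀ z, B (w z) * H n x (d z)
        = B (w z) * ∑ i, B (x i) + B (w z) * ∑ i, B (d z i)
          - 2 * (B (w z) * ∑ i, B (x i) * B (d z i)) := by
      intro z
      unfold H
      simp only [Finset.mul_sum, ← Finset.sum_add_distrib, ← Finset.sum_sub_distrib]
      exact Finset.sum_congr rfl fun i _ => by ring
    rw [Finset.sum_congr rfl fun z _ => per z, Finset.sum_sub_distrib,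
      Finset.sum_add_distrib, ← Finset.mul_sum]
  rw [h2, h3, Finset.sum_add_distrib, h3', h4]
  unfold G
  rw [hH]
  ring


noncomputable def wind (d : Fin m ≃ (Fin n → Fin 2)) (x : Fin n → Fin 2) : Fin m → Fin 2 :=
  fun z => if z = d.symm x then 1 else 0

lemma B_wind (d : Fin m ≃ (Fin n → Fin 2)) (x : Fin n → Fin 2) (z : Fin m) :
    B (wind d x z) = if z = d.symm x then 1 else 0 := by
  unfold wind
  split <;> simp [B_one, B_zero]

lemma G_ind (P : ℝ) (f : (Fin n → Fin 2) → ℝ) (d : Fin m ≃ (Fin n → Fin 2))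
    (x : Fin n → Fin 2) : G n m P f d x (wind d x) = f x := by
  unfold G
  have e1 : ∑ z, B (wind d x z) * f (d z) = f x := by
    have : ∀ z, B (wind d x z) * f (d z) = if z = d.symm x then f (d z) else 0 := by
      intro z; rw [B_wind]; split <;> ring
    rw [Finset.sum_congr rfl fun z _ => this z, Finset.sum_ite_eq' Finset.univ (d.symm x)]
    simp
  have e2 : ∑ z, B (wind d x z) = 1 := by
    simp only [B_wind]
    rw [Finset.sum_ite_eq' Finset.univ (d.symm x) (fun _ => (1:ℝ))]
    simp
  have e3 : ∑ z, B (wind d x z) * H n x (d z) = 0 := by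
    have : ∀ z, B (wind d x z) * H n x (d z) = if z = d.symm x then H n x (d z) else 0 := by
      intro z; rw [B_wind]; split <;> ring
    rw [Finset.sum_congr rfl fun z _ => this z, Finset.sum_ite_eq' Finset.univ (d.symm x)]
    simp [H_self]
  rw [e1, e2, e3]
  ring

lemma G_zero (P : ℝ) (f : (Fin n → Fin 2) → ℝ) (d : Fin m ≃ (Fin n → Fin 2))
    (x : Fin n → Fin 2) : G n m P f d x (fun _ => 0) = P := by
  unfold G
  simp [B_zero]

lemma fin_two_cases (t : Fin 2) : t = 0 ∨ t = 1 := by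
  have h := t.isLt
  have h' : t.val = 0 ∨ t.val = 1 := by omega
  rcases h' with h' | h'
  · exact Or.inl (Fin.ext h')
  · exact Or.inr (Fin.ext h')

lemma f_le_G (A : ℝ) (f : (Fin n → Fin 2) → ℝ) (d : Fin m ≃ (Fin n → Fin 2))
    (hA : ∀ v, |f v| ≤ A) (x : Fin n → Fin 2) (w : Fin m → Fin 2) :
    f x ≤ G n m (2 * A + 1) f d x w := by
  have hA0 : 0 ≤ A := le_trans (abs_nonneg _) (hA x)
  have hfx : f x ≤ A := (abs_le.mp (hA x)).2
  by_cases hb : ∃ z, d z ≠ x ∧ w z = 1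
  · obtain ⟨z₁, hz1, hw1⟩ := hb
    have hS0 : (0:ℝ) ≤ ∑ z, B (w z) := Finset.sum_nonneg fun z _ => B_nonneg _
    have hWf : -A * (∑ z, B (w z)) ≤ ∑ z, B (w z) * f (d z) := by
      have : -A * (∑ z, B (w z)) = ∑ z, B (w z) * (-A) := by
        rw [← Finset.sum_mul]; ring
      rw [this]
      exact Finset.sum_le_sum fun z _ =>
        mul_le_mul_of_nonneg_left (abs_le.mp (hA (d z))).1 (B_nonneg _)
    have hTnn : ∀ z, z ∈ Finset.univ → (0:ℝ) ≤ B (w z) * H n x (d z) :=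
      fun z _ => mul_nonneg (B_nonneg _) (H_nonneg _ _ _)
    have hT1 : (1:ℝ) ≤ ∑ z, B (w z) * H n x (d z) := by
      have h1 : (1:ℝ) ≤ B (w z₁) * H n x (d z₁) := by
        rw [hw1, B_one, one_mul]
        exact H_ge_one n x (d z₁) (Ne.symm hz1)
      exact le_trans h1 (Finset.single_le_sum hTnn (mem_univ z₁))
    have hTS : (∑ z, B (w z)) - 1 ≤ ∑ z, B (w z) * H n x (d z) := by
      have per : ∀ z, B (w z) - (if z = d.symm x then (1:ℝ) else 0)
          ≤ B (w z) * H n x (d z) := by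
        intro z
        by_cases h : z = d.symm x
        · rw [if_pos h]
          have := B_le_one (w z)
          have := mul_nonneg (B_nonneg (w z)) (H_nonneg n x (d z))
          linarith
        · rw [if_neg h, sub_zero]
          have hdz : x ≠ d z := by
            intro hh
            exact h (by rw [hh, Equiv.symm_apply_apply])
          have h1 := H_ge_one n x (d z) hdz
          calc B (w z) = B (w z) * 1 := by ring
            _ ≤ B (w z) * H n x (d z) :=
              mul_le_mul_of_nonneg_left h1 (B_nonneg _)
      calc (∑ z, B (w z)) - 1
          = ∑ z, (B (w z) - (if z = d.symm x then (1:ℝ) else 0)) := by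
            rw [Finset.sum_sub_distrib,
              Finset.sum_ite_eq' Finset.univ (d.symm x) (fun _ => (1:ℝ))]
            simp
        _ ≤ _ := Finset.sum_le_sum fun z _ => per z
    have hcast : ∑ z, B (w z) = ((∑ z, (w z).val : ℕ) : ℝ) := by
      rw [Nat.cast_sum]; rfl
    have hP0 : (0:ℝ) ≤ 2 * A + 1 := by linarith
    rcases lt_or_ge (∑ z, (w z).val) 2 with hk2 | hk2
    · have hS1 : (∑ z, B (w z)) ≤ 1 := by
        rw [hcast]; exact_mod_cast Nat.lt_succ_iff.mp hk2
      have t1 : 0 ≤ (2*A+1) * ((∑ z, B (w z) * H n x (d z)) - 1) :=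
        mul_nonneg hP0 (by linarith)
      have t2 : 0 ≤ (2*A+1) * ((∑ z, B (w z)) - 1)^2 := mul_nonneg hP0 (sq_nonneg _)
      have t3 : 0 ≤ A * (1 - ∑ z, B (w z)) := mul_nonneg hA0 (by linarith)
      unfold G
      nlinarith [hWf, t1, t2, t3, hfx]
    · have hS2 : (2:ℝ) ≤ ∑ z, B (w z) := by
        rw [hcast]; exact_mod_cast hk2
      have t1 : 0 ≤ (2*A+1) * ((((∑ z, B (w z)) - 1))^2 - ((∑ z, B (w z)) - 1)) :=
        mul_nonneg hP0 (by nlinarith)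
      have t2 : 0 ≤ (2*A+1) * ((∑ z, B (w z) * H n x (d z)) - ((∑ z, B (w z)) - 1)) :=
        mul_nonneg hP0 (by linarith)
      have t3 : 0 ≤ (3*A+2) * ((∑ z, B (w z)) - 2) :=
        mul_nonneg (by linarith) (by linarith)
      unfold G
      nlinarith [hWf, t1, t2, t3, hfx]
  · push_neg at hb
    have hw0 : ∀ z, z ≠ d.symm x → w z = 0 := by
      intro z hz
      have hdz : d z ≠ x := fun h => hz (by rw [← h, Equiv.symm_apply_apply])
      have h1 := hb z hdz
      rcases fin_two_cases (w z) with h | h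
      · exact h
      · exact absurd h h1
    by_cases hz0 : w (d.symm x) = 1
    · have hwe : w = wind d x := by
        funext z
        unfold wind
        by_cases h : z = d.symm x
        · rw [if_pos h, h, hz0]
        · rw [if_neg h, hw0 z h]
      rw [hwe, G_ind]
    · have hwe : w = fun _ => 0 := by
        funext z
        by_cases h : z = d.symm x
        · rcases fin_two_cases (w z) with hh | hh
          · exact hh
          · exact absurd (h ▸ hh) hz0
        · exact hw0 z h
      rw [hwe, G_zero]
      linarith

end PBQubo

/-- Every pseudo-Boolean function f : {0,1}^n → ℝ can be represented, pointwise and in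
    minimum, by a QUBO function in n + m variables, minimised over the m extra variables. -/
theorem pseudo_boolean_to_qubo (n : ℕ) (hn : 1 ≤ n) (f : (Fin n → Fin 2) → ℝ) :
    ∃ (m : ℕ) (c : ℝ) (u : Fin (n + m) → ℝ) (e : Fin (n + m) → Fin (n + m) → ℝ),
      (∀ x : Fin n → Fin 2,
        f x =
          Finset.univ.inf' Finset.univ_nonempty
            (fun w : Fin m → Fin 2 =>
              c + (∑ j, u j * (((Fin.append x w j).val : ℕ) : ℝ)) +
                ∑ p ∈ Finset.univ.filter (fun p : Fin (n + m) × Fin (n + m) => p.1 < p.2),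
                  e p.1 p.2 * (((Fin.append x w p.1).val : ℕ) : ℝ) *
                    (((Fin.append x w p.2).val : ℕ) : ℝ))) ∧
      Finset.univ.inf' Finset.univ_nonempty f =
        Finset.univ.inf' Finset.univ_nonempty
          (fun y : Fin (n + m) → Fin 2 =>
            c + (∑ j, u j * ((y j : ℕ) : ℝ)) +
              ∑ p ∈ Finset.univ.filter (fun p : Fin (n + m) × Fin (n + m) => p.1 < p.2),
                e p.1 p.2 * ((y p.1 : ℕ) : ℝ) * ((y p.2 : ℕ) : ℝ)) := by
  classical
  set d : Fin (2 ^ n) ≃ (Fin n → Fin 2) := (finFunctionFinEquiv (m := 2) (n := n)).symm with hd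
  set A : ℝ := Finset.univ.sup' Finset.univ_nonempty (fun v => |f v|) with hAdef
  have hA : ∀ v, |f v| ≤ A := fun v => by
    rw [hAdef]
    exact Finset.le_sup' (fun v => |f v|) (Finset.mem_univ v)
  refine ⟨2 ^ n, 2 * A + 1, PBQubo.uu n (2 ^ n) (2 * A + 1) f d,
    PBQubo.ee n (2 ^ n) (2 * A + 1) d, ?_, ?_⟩
  case _ =>
    intro x
    apply le_antisymm
    · apply Finset.le_inf'
      intro w _
      rw [PBQubo.key]
      exact PBQubo.f_le_G A f d hA x w
    · calc Finset.univ.inf' Finset.univ_nonempty _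
          ≤ _ := Finset.inf'_le _ (Finset.mem_univ (PBQubo.wind d x))
        _ = f x := by rw [PBQubo.key, PBQubo.G_ind]
  case _ =>
    have hpt : ∀ x : Fin n → Fin 2,
        f x = Finset.univ.inf' Finset.univ_nonempty
          (fun w : Fin (2 ^ n) → Fin 2 =>
            (2 * A + 1) +
              (∑ j, PBQubo.uu n (2 ^ n) (2 * A + 1) f d j *
                (((Fin.append x w j).val : ℕ) : ℝ)) +
              ∑ p ∈ Finset.univ.filter
                  (fun p : Fin (n + 2 ^ n) × Fin (n + 2 ^ n) => p.1 < p.2),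
                PBQubo.ee n (2 ^ n) (2 * A + 1) d p.1 p.2 *
                  (((Fin.append x w p.1).val : ℕ) : ℝ) *
                  (((Fin.append x w p.2).val : ℕ) : ℝ)) := by
      intro x
      apply le_antisymm
      · apply Finset.le_inf'
        intro w _
        rw [PBQubo.key]
        exact PBQubo.f_le_G A f d hA x w
      · calc Finset.univ.inf' Finset.univ_nonempty _
            ≤ _ := Finset.inf'_le _ (Finset.mem_univ (PBQubo.wind d x))
          _ = f x := by rw [PBQubo.key, PBQubo.G_ind]
    apply le_antisymm
    · apply Finset.le_inf'
      intro y _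
      have happ : Fin.append (fun i => y (Fin.castAdd (2 ^ n) i))
          (fun z => y (Fin.natAdd n z)) = y := by
        funext j
        induction j using Fin.addCases with
        | left i => rw [Fin.append_left]
        | right z => rw [Fin.append_right]
      have h1 := Finset.inf'_le
        (fun w : Fin (2 ^ n) → Fin 2 =>
          (2 * A + 1) +
            (∑ j, PBQubo.uu n (2 ^ n) (2 * A + 1) f d j *
              (((Fin.append (fun i => y (Fin.castAdd (2 ^ n) i)) w j).val : ℕ) : ℝ)) +
            ∑ p ∈ Finset.univ.filter
                (fun p : Fin (n + 2 ^ n) × Fin (n + 2 ^ n) => p.1 < p.2),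
              PBQubo.ee n (2 ^ n) (2 * A + 1) d p.1 p.2 *
                (((Fin.append (fun i => y (Fin.castAdd (2 ^ n) i)) w p.1).val : ℕ) : ℝ) *
                (((Fin.append (fun i => y (Fin.castAdd (2 ^ n) i)) w p.2).val : ℕ) : ℝ))
        (Finset.mem_univ (fun z => y (Fin.natAdd n z)))
      rw [← hpt (fun i => y (Fin.castAdd (2 ^ n) i))] at h1
      simp only [happ] at h1
      calc Finset.univ.inf' Finset.univ_nonempty f
          ≤ f (fun i => y (Fin.castAdd (2 ^ n) i)) := Finset.inf'_le _ (Finset.mem_univ _)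
        _ ≤ _ := h1
    · apply Finset.le_inf'
      intro x _
      calc Finset.univ.inf' Finset.univ_nonempty _
          ≤ _ := Finset.inf'_le _ (Finset.mem_univ (Fin.append x (PBQubo.wind d x)))
        _ = f x := by
            show (2 * A + 1) + _ + _ = f x
            rw [PBQubo.key, PBQubo.G_ind]
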